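/- With the setup of the $\varepsilon$-approximations $Y_\varepsilon$ (continuous solutions of $Y_\varepsilon(t) = Y_0 + \int_0^t \frac{k}{Y_\varepsilon(s)\mathbf{1}_{\{Y_\varepsilon(s)>0\}}+\varepsilon}\,ds - a\int_0^t Y_\varepsilon(s)\,ds + \sigma g(t)$ for a fixed continuous path $g$), suppose that the limit $Y(t)=\lim_{\varepsilon\downarrow0}Y_\varepsilon(t)$ is finite for every $t\in[0,T]$ and that $\lim_{\varepsilon\to0}\int_0^T \frac{k}{Y_\varepsilon(s)\mathbf{1}_{\{Y_\varepsilon(s)>0\}}+\varepsilon}\,ds < \infty$. Then the Lebesgue measure $\lambda\{t\in[0,T] : Y_\varepsilon(t)\le 0\}$ tends to $0$ as $\varepsilon\to 0$. -/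

import Mathlib

open Filter Topology MeasureTheory Set

/-- Pathwise version of Lemma 2: the Lebesgue measure of the set where the
ε-approximation is nonpositive tends to zero as ε → 0. -/
theorem measure_nonpositive_tendsto_zero
    (Y₀ k a σ T : ℝ) (hY₀ : 0 < Y₀) (hk : 0 < k) (ha : 0 < a) (hσ : 0 < σ) (hT : 0 < T)
    (g : ℝ → ℝ) (hg : Continuous g) (hg0 : g 0 = 0)
    (Y : ℝ → ℝ → ℝ) (Ylim : ℝ → ℝ)
    (hYc : ∀ ε : ℝ, 0 < ε → Continuous (Y ε))
    (hYeq : ∀ ε : ℝ, 0 < ε → ∀ t ∈ Set.Icc (0:ℝ) T,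
      Y ε t = Y₀ + (∫ s in (0:ℝ)..t, k / ((if 0 < Y ε s then Y ε s else 0) + ε))
        - a * (∫ s in (0:ℝ)..t, Y ε s) + σ * g t)
    (hlim : ∀ t ∈ Set.Icc (0:ℝ) T,
      Tendsto (fun ε => Y ε t) (𝓝[>] 0) (𝓝 (Ylim t)))
    (L : ℝ)
    (hL : Tendsto
      (fun ε => ∫ s in (0:ℝ)..T, k / ((if 0 < Y ε s then Y ε s else 0) + ε))
      (𝓝[>] 0) (𝓝 L)) :
    Tendsto (fun ε => volume {t ∈ Set.Icc (0:ℝ) T | Y ε t ≤ 0}) (𝓝[>] 0) (𝓝 0) := by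
  set C := (L + 1) / k with hC
  have key : ∀ᶠ ε in 𝓝[>] (0:ℝ),
      volume {t ∈ Set.Icc (0:ℝ) T | Y ε t ≤ 0} ≤ ENNReal.ofReal (ε * C) := by
    have h1 : ∀ᶠ ε in 𝓝[>] (0:ℝ),
        (∫ s in (0:ℝ)..T, k / ((if 0 < Y ε s then Y ε s else 0) + ε)) < L + 1 :=
      hL.eventually (Filter.Tendsto.eventually_lt_const (by linarith) tendsto_id)
    filter_upwards [h1, self_mem_nhdsWithin] with ε hlt hε
    replace hε : (0:ℝ) < ε := hε
    set f : ℝ → ℝ := fun s => k / (max (Y ε s) 0 + ε) with hf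
    have hfeq : (fun s => k / ((if 0 < Y ε s then Y ε s else 0) + ε)) = f := by
      funext s
      rcases le_or_gt (Y ε s) 0 with h | h
      · simp [hf, not_lt.2 h, max_eq_right h]
      · simp [hf, h, max_eq_left h.le]
    have hfc : Continuous f :=
      continuous_const.div (((hYc ε hε).max continuous_const).add continuous_const)
        (fun s => by positivity)
    have hfnn : ∀ s, 0 ≤ f s := fun s => by positivity
    have hInt : IntegrableOn f (Set.Ioc 0 T) := hfc.integrableOn_Ioc
    set S := Set.Ioc (0:ℝ) T ∩ {t | Y ε t ≤ 0} with hS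
    have hSm : MeasurableSet S :=
      measurableSet_Ioc.inter (measurableSet_le (hYc ε hε).measurable measurable_const)
    have hμS : volume S ≠ ⊤ :=
      ((measure_mono (Set.inter_subset_left)).trans_lt measure_Ioc_lt_top).ne
    have h2 : (volume S).toReal * (k / ε) ≤ ∫ s in Set.Ioc (0:ℝ) T, f s := by
      have heq : ∫ s in S, f s = (volume S).toReal * (k / ε) := by
        rw [setIntegral_congr_fun hSm (g := fun _ => k / ε) ?_, setIntegral_const,
          smul_eq_mul, measureReal_def]
        intro s hs
        simp [hf, max_eq_right (show Y ε s ≤ 0 from hs.2)]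
      rw [← heq]
      exact setIntegral_mono_set hInt
        (Filter.Eventually.of_forall fun s => hfnn s)
        (HasSubset.Subset.eventuallyLE Set.inter_subset_left)
    have h3 : (volume S).toReal * (k / ε) ≤ L + 1 := by
      refine h2.trans ?_
      rw [← intervalIntegral.integral_of_le hT.le]
      rw [hfeq] at hlt
      exact hlt.le
    have h4 : (volume S).toReal ≤ ε * C := by
      have hkε : 0 < k / ε := div_pos hk hε
      have := (le_div_iff₀ hkε).2 h3
      calc (volume S).toReal ≤ (L + 1) / (k / ε) := this
        _ = ε * C := by rw [hC]; field_simp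
    have hsub : {t ∈ Set.Icc (0:ℝ) T | Y ε t ≤ 0} ⊆ S ∪ {0} := by
      rintro t ⟨⟨h0, hT'⟩, hle⟩
      rcases eq_or_lt_of_le h0 with h | h
      · right; simp [← h]
      · left; exact ⟨⟨h, hT'⟩, hle⟩
    calc volume {t ∈ Set.Icc (0:ℝ) T | Y ε t ≤ 0}
        ≤ volume (S ∪ {0}) := measure_mono hsub
      _ ≤ volume S + volume ({0} : Set ℝ) := measure_union_le _ _
      _ = volume S := by simp
      _ = ENNReal.ofReal (volume S).toReal := (ENNReal.ofReal_toReal hμS).symm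
      _ ≤ ENNReal.ofReal (ε * C) := ENNReal.ofReal_le_ofReal h4
  have hbound : Tendsto (fun ε : ℝ => ENNReal.ofReal (ε * C)) (𝓝[>] 0) (𝓝 0) := by
    have : Tendsto (fun ε : ℝ => ε * C) (𝓝[>] 0) (𝓝 0) := by
      have := (tendsto_id.mono_left nhdsWithin_le_nhds :
        Tendsto (fun ε : ℝ => ε) (𝓝[>] 0) (𝓝 0)).mul_const C
      simpa using this
    have := (ENNReal.continuous_ofReal.tendsto 0).comp this
    simpa [Function.comp_def] using this
  exact tendsto_of_tendsto_of_tendsto_of_le_of_le' tendsto_const_nhds hbound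
    (Filter.Eventually.of_forall fun _ => zero_le) key
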